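/- Let T: X → X be a homeomorphism of a compact metric space which is minimal (every orbit is dense), and let f: X → R be continuous. If there exist a point x₀ ∈ X and a constant C such that |Σ_{k=0}^{n−1} f(T^k x₀)| ≤ C for all n ≥ 1, then there exists a bounded (indeed continuous) function u: X → R with u(Tx) − u(x) = f(x) for all x ∈ X. -/

import Mathlib

/-- Gottschalk–Hedlund theorem: for a minimal homeomorphism `T` of a compact
metric space and continuous `f`, boundedness of the Birkhoff sums of `f` along
a single orbit implies the cohomological equation `u ∘ T - u = f` has a
continuous (in particular bounded) solution. -/
theorem stmt5 {X : Type*} [MetricSpace X] [CompactSpace X]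
    (T : X ≃ₜ X)
    (hmin : ∀ x : X, Dense (Set.range fun n : ℤ => (T.toEquiv ^ n) x))
    (f : X → ℝ) (hf : Continuous f)
    (x₀ : X) (C : ℝ)
    (hbound : ∀ n ≥ 1, |∑ k ∈ Finset.range n, f ((⇑T)^[k] x₀)| ≤ C) :
    ∃ u : X → ℝ, Continuous u ∧ ∀ x, u (T x) - u x = f x := by
  classical
  -- the skew product
  set F : X × ℝ → X × ℝ := fun p => (T p.1, p.2 + f p.1) with hFdef
  have hFc : Continuous F :=
    (T.continuous.comp continuous_fst).prodMk (continuous_snd.add (hf.comp continuous_fst))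
  -- iterate formula
  have hiter : ∀ n : ℕ,
      F^[n] (x₀, 0) = ((⇑T)^[n] x₀, ∑ k ∈ Finset.range n, f ((⇑T)^[k] x₀)) := by
    intro n
    induction n with
    | zero => simp
    | succ n ih =>
      rw [Function.iterate_succ_apply', ih, Function.iterate_succ_apply',
        Finset.sum_range_succ]
  set C' : ℝ := max C 0 with hC'def
  set B : Set (X × ℝ) := Set.univ ×ˢ Set.Icc (-C') C' with hBdef
  have hBcl : IsClosed B := isClosed_univ.prod isClosed_Icc
  have hBc : IsCompact B := isCompact_univ.prod isCompact_Icc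
  have horb : ∀ n : ℕ, F^[n] (x₀, 0) ∈ B := by
    intro n
    rw [hiter n]
    refine ⟨Set.mem_univ _, ?_⟩
    rcases Nat.eq_zero_or_pos n with h0 | h1
    · subst h0; simp [hC'def]
    · have := hbound n h1
      have habs : |∑ k ∈ Finset.range n, f ((⇑T)^[k] x₀)| ≤ C' :=
        le_trans this (le_max_left _ _)
      rcases abs_le.mp habs with ⟨h1, h2⟩
      exact ⟨h1, h2⟩
  set K0 : Set (X × ℝ) := closure (Set.range fun n : ℕ => F^[n] (x₀, 0)) with hK0def
  have hK0B : K0 ⊆ B := closure_minimal (by rintro _ ⟨n, rfl⟩; exact horb n) hBcl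
  have hK0cl : IsClosed K0 := isClosed_closure
  have hK0c : IsCompact K0 := hBc.of_isClosed_subset hK0cl hK0B
  have hK0ne : K0.Nonempty := ⟨(x₀, 0), subset_closure ⟨0, rfl⟩⟩
  have hK0inv : F '' K0 ⊆ K0 := by
    have hr : F '' (Set.range fun n : ℕ => F^[n] (x₀, 0)) ⊆
        Set.range fun n : ℕ => F^[n] (x₀, 0) := by
      rintro _ ⟨_, ⟨n, rfl⟩, rfl⟩
      exact ⟨n + 1, Function.iterate_succ_apply' F n _⟩
    calc F '' K0 ⊆ closure (F '' (Set.range fun n : ℕ => F^[n] (x₀, 0))) :=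
          image_closure_subset_closure_image hFc
      _ ⊆ K0 := closure_mono hr
  -- Zorn: a minimal nonempty closed invariant subset
  set S : Set (Set (X × ℝ)) := {A | A.Nonempty ∧ A ⊆ K0 ∧ IsClosed A ∧ F '' A ⊆ A} with hSdef
  have hchain : ∀ c ⊆ S, IsChain (· ⊆ ·) c → c.Nonempty →
      ∃ lb ∈ S, ∀ s ∈ c, lb ⊆ s := by
    intro c hcS hc hcne
    haveI : Nonempty c := hcne.to_subtype
    refine ⟨⋂₀ c, ⟨?_, ?_, ?_, ?_⟩, fun s hs => Set.sInter_subset_of_mem hs⟩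
    · rw [Set.sInter_eq_iInter]
      apply IsCompact.nonempty_iInter_of_directed_nonempty_isCompact_isClosed
      · rintro ⟨a, ha⟩ ⟨b, hb⟩
        rcases hc.total ha hb with h | h
        · exact ⟨⟨a, ha⟩, le_refl _, h⟩
        · exact ⟨⟨b, hb⟩, h, le_refl _⟩
      · exact fun i => (hcS i.2).1
      · exact fun i => hK0c.of_isClosed_subset (hcS i.2).2.2.1 (hcS i.2).2.1
      · exact fun i => (hcS i.2).2.2.1
    · rcases hcne with ⟨a, ha⟩
      exact (Set.sInter_subset_of_mem ha).trans (hcS ha).2.1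
    · exact isClosed_sInter fun s hs => (hcS hs).2.2.1
    · intro p hp
      rw [Set.mem_sInter]
      intro s hs
      rcases hp with ⟨q, hq, rfl⟩
      exact (hcS hs).2.2.2 ⟨q, Set.mem_sInter.mp hq s hs, rfl⟩
  obtain ⟨M, -, hMmin⟩ := zorn_superset_nonempty S hchain K0
    ⟨hK0ne, le_refl _, hK0cl, hK0inv⟩
  obtain ⟨hMne, hMK0, hMcl, hMinv⟩ := hMmin.1
  have hMc : IsCompact M := hK0c.of_isClosed_subset hMcl hMK0
  have hmin' : ∀ A ∈ S, A ⊆ M → A = M := fun A hA hAM =>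
    le_antisymm hAM (hMmin.2 hA hAM)
  -- M is fully invariant
  have hFM : F '' M = M := by
    apply hmin'
    · exact ⟨hMne.image F, hMinv.trans hMK0, (hMc.image hFc).isClosed,
        Set.image_mono hMinv⟩
    · exact hMinv
  -- fibers of M are singletons
  have hfiber : ∀ x t t', (x, t) ∈ M → (x, t') ∈ M → t = t' := by
    intro x t t' ht ht'
    by_contra hne
    set s : ℝ := t' - t with hsdef
    have hs : s ≠ 0 := sub_ne_zero.mpr (Ne.symm hne)
    set V : X × ℝ → X × ℝ := fun p => (p.1, p.2 + s) with hVdef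
    have hVc : Continuous V := continuous_fst.prodMk (continuous_snd.add continuous_const)
    set Ms : Set (X × ℝ) := V '' M with hMsdef
    have hVF : ∀ p, F (V p) = V (F p) := by
      intro p
      show ((T p.1 : X), p.2 + s + f p.1) = (T p.1, p.2 + f p.1 + s)
      rw [Prod.mk.injEq]
      exact ⟨rfl, by ring⟩
    have hMsinv : F '' Ms ⊆ Ms := by
      rintro _ ⟨_, ⟨q, hq, rfl⟩, rfl⟩
      rw [hVF q]
      exact ⟨F q, hFM ▸ ⟨q, hq, rfl⟩, rfl⟩
    have hMMs : M ∩ Ms = M := by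
      apply hmin'
      · refine ⟨⟨(x, t'), ht', ⟨(x, t), ht, ?_⟩⟩, (Set.inter_subset_left).trans hMK0,
          hMcl.inter (hMc.image hVc).isClosed, ?_⟩
        · show ((x : X), t + s) = (x, t')
          rw [Prod.mk.injEq]
          exact ⟨rfl, by rw [hsdef]; ring⟩
        · rintro p ⟨q, hq, rfl⟩
          exact ⟨hMinv ⟨q, hq.1, rfl⟩, hMsinv ⟨q, hq.2, rfl⟩⟩
      · exact Set.inter_subset_left
    -- M ⊆ Ms : every point can be translated down by s
    have hdown : ∀ (y : X) (r : ℝ), (y, r) ∈ M → (y, r - s) ∈ M := by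
      intro y r hp
      have hms : ((y, r) : X × ℝ) ∈ Ms := by
        have : ((y, r) : X × ℝ) ∈ M ∩ Ms := by rw [hMMs]; exact hp
        exact this.2
      rcases hms with ⟨q, hq, hqe⟩
      have hq1 : q.1 = y := congrArg Prod.fst hqe
      have hq2 : q.2 + s = r := congrArg Prod.snd hqe
      have hqeq : q = (y, r - s) := by
        rw [Prod.ext_iff]
        exact ⟨hq1, by dsimp; linarith⟩
      rwa [hqeq] at hq
    have hiterdown : ∀ n : ℕ, (x, t - (n : ℝ) * s) ∈ M := by
      intro n
      induction n with
      | zero => simpa using ht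
      | succ n ih =>
        have h := hdown x _ ih
        have he : t - (n : ℝ) * s - s = t - ((n + 1 : ℕ) : ℝ) * s := by
          push_cast; ring
        rwa [he] at h
    -- contradiction with boundedness
    obtain ⟨n, hn⟩ := exists_nat_gt ((|t| + C') / |s|)
    have hmem := hK0B (hMK0 (hiterdown n))
    have habs : |t - (n : ℝ) * s| ≤ C' := abs_le.mpr ⟨hmem.2.1, hmem.2.2⟩
    have hs' : 0 < |s| := abs_pos.mpr hs
    have hngt : |t| + C' < n * |s| := by
      rwa [div_lt_iff₀ hs'] at hn
    have hkey : (n : ℝ) * |s| - |t| ≤ |t - (n : ℝ) * s| := by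
      rw [show |t - (n : ℝ) * s| = |(n : ℝ) * s - t| from abs_sub_comm _ _]
      calc (n : ℝ) * |s| - |t| = |(n : ℝ) * s| - |t| := by rw [abs_mul, Nat.abs_cast]
        _ ≤ |(n : ℝ) * s - t| := abs_sub_abs_le_abs_sub _ _
    linarith
  -- the projection of M is all of X
  have hproj : ∀ x : X, ∃ t : ℝ, (x, t) ∈ M := by
    set A : Set X := Prod.fst '' M with hAdef
    have hAcl : IsClosed A := (hMc.image continuous_fst).isClosed
    have hAne : A.Nonempty := hMne.image _
    have hTA : T '' A = A := by
      calc T '' A = (⇑T ∘ Prod.fst) '' M := by rw [hAdef, Set.image_image]; rfl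
        _ = (Prod.fst ∘ F) '' M := by rfl
        _ = Prod.fst '' (F '' M) := by rw [Set.image_comp]
        _ = A := by rw [hFM]
    have hfwd : ∀ y ∈ A, T y ∈ A := fun y hy => hTA ▸ ⟨y, hy, rfl⟩
    have hbwd : ∀ y ∈ A, T.symm y ∈ A := by
      intro y hy
      rw [← hTA] at hy
      rcases hy with ⟨z, hz, rfl⟩
      simpa using hz
    have hZ : ∀ n : ℤ, ∀ y ∈ A, (T.toEquiv ^ n) y ∈ A := by
      intro n
      induction n using Int.induction_on with
      | zero => intro y hy; simpa using hy
      | succ n ih =>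
        intro y hy
        have : T.toEquiv ^ ((n : ℤ) + 1) = T.toEquiv ^ (n : ℤ) * T.toEquiv := zpow_add_one _ _
        rw [this, Equiv.Perm.mul_apply]
        exact ih _ (hfwd y hy)
      | pred n ih =>
        intro y hy
        have : T.toEquiv ^ (-(n : ℤ) - 1) = T.toEquiv ^ (-(n : ℤ)) * (T.toEquiv)⁻¹ :=
          zpow_sub_one _ _
        rw [this, Equiv.Perm.mul_apply]
        have hsymm : (T.toEquiv)⁻¹ y = T.symm y := rfl
        rw [hsymm]
        exact ih _ (hbwd y hy)
    rcases hAne with ⟨a, ha⟩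
    have hrange : Set.range (fun n : ℤ => (T.toEquiv ^ n) a) ⊆ A := by
      rintro _ ⟨n, rfl⟩; exact hZ n a ha
    have hAuniv : A = Set.univ := by
      apply Set.eq_univ_of_univ_subset
      calc Set.univ = closure (Set.range fun n : ℤ => (T.toEquiv ^ n) a) :=
            ((hmin a).closure_eq).symm
        _ ⊆ closure A := closure_mono hrange
        _ = A := hAcl.closure_eq
    intro x
    have : x ∈ A := hAuniv ▸ Set.mem_univ x
    rcases this with ⟨p, hp, hpe⟩
    exact ⟨p.2, by rwa [← hpe, Prod.mk.eta]⟩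
  -- build the homeomorphism M ≃ₜ X and the solution u
  haveI : CompactSpace M := isCompact_iff_compactSpace.mp hMc
  have hπbij : Function.Bijective (fun p : M => (p : X × ℝ).1) := by
    constructor
    · rintro ⟨⟨x, t⟩, hp⟩ ⟨⟨x', t'⟩, hq⟩ h
      simp only [Subtype.mk.injEq, Prod.mk.injEq] at h ⊢
      subst h
      exact ⟨rfl, hfiber x t t' hp hq⟩
    · intro x
      rcases hproj x with ⟨t, ht⟩
      exact ⟨⟨(x, t), ht⟩, rfl⟩
  let e : M ≃ X := Equiv.ofBijective _ hπbij
  have hec : Continuous e := continuous_fst.comp continuous_subtype_val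
  let h : M ≃ₜ X := hec.homeoOfEquivCompactToT2
  set u : X → ℝ := fun x => ((h.symm x : M) : X × ℝ).2 with hudef
  have huc : Continuous u :=
    (continuous_snd.comp continuous_subtype_val).comp h.symm.continuous
  have hgraph : ∀ x : X, (x, u x) ∈ M := by
    intro x
    have h1 : (((h.symm x : M) : X × ℝ)).1 = x := by
      have := h.apply_symm_apply x
      exact this
    have h2 : ((h.symm x : M) : X × ℝ) ∈ M := (h.symm x).2
    have : ((h.symm x : M) : X × ℝ) = (x, u x) := by
      rw [Prod.ext_iff]; exact ⟨h1, rfl⟩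
    rwa [this] at h2
  refine ⟨u, huc, fun x => ?_⟩
  have h1 : F (x, u x) ∈ M := hFM ▸ ⟨(x, u x), hgraph x, rfl⟩
  have h2 : (T x, u x + f x) ∈ M := h1
  have h3 : (T x, u (T x)) ∈ M := hgraph (T x)
  have := hfiber (T x) (u (T x)) (u x + f x) h3 h2
  linarith
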